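/- Let m, n ∈ ℕ and let 𝒫' be a finite-dimensional ℝ-linear subspace of the space of polynomial maps ℝ^m → ℝ^n (each coordinate a polynomial function). For i = 1, …, n let π_i(𝒫') := { x ↦ (f(x))_i : f ∈ 𝒫' } be the i-th coordinate projection of 𝒫', and set M₀ := max_{1 ≤ i ≤ n} dim π_i(𝒫'). Let M ≥ M₀ and let w₁, …, w_M > 0 be positive weights. Then for almost every tuple (x₁, …, x_M) ∈ (ℝ^m)^M with respect to Lebesgue measure, the symmetric bilinear form (f, g) ↦ (1/M) Σ_{i=1}^M w_i ⟨f(x_i), g(x_i)⟩ is an inner product (i.e., positive definite) on 𝒫'. -/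

import Mathlib

open MeasureTheory

/-- The `i`-th coordinate projection on spaces of maps `ℝ^m → ℝ^n`. -/
def coordProj (m n : ℕ) (i : Fin n) :
    ((Fin m → ℝ) → (Fin n → ℝ)) →ₗ[ℝ] ((Fin m → ℝ) → ℝ) :=
  (LinearMap.proj i : (Fin n → ℝ) →ₗ[ℝ] ℝ).compLeft ((Fin m → ℝ))

lemma ae_prod_of_ae_ae {α β : Type*} [MeasurableSpace α] [MeasurableSpace β]
    {μ : Measure α} {ν : Measure β} [SFinite μ] [SFinite ν] {p : α × β → Prop}
    (hp : MeasurableSet {z : α × β | p z}) (h : ∀ᵐ y ∂ν, ∀ᵐ x ∂μ, p (x, y)) :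
    ∀ᵐ z ∂μ.prod ν, p z := by
  rw [← Measure.prod_swap, MeasureTheory.ae_map_iff measurable_swap.aemeasurable hp]
  exact (Measure.ae_prod_iff_ae_ae (hp.preimage measurable_swap)).mpr h

lemma mvpoly_ae : ∀ {N : ℕ} (p : MvPolynomial (Fin N) ℝ), p ≠ 0 →
    ∀ᵐ x ∂(volume : Measure (Fin N → ℝ)), MvPolynomial.eval x p ≠ 0 := by
  intro N
  induction N with
  | zero =>
    intro p hp
    refine ae_of_all _ fun x => ?_
    obtain ⟨a, rfl⟩ := MvPolynomial.C_surjective (Fin 0) p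
    simpa using fun h => hp (by rw [h]; simp)
  | succ N ih =>
    intro p hp
    set q := MvPolynomial.finSuccEquiv ℝ N p with hqdef
    have hq : q ≠ 0 := by
      simp only [hqdef, ne_eq, EmbeddingLike.map_eq_zero_iff]
      exact hp
    have hlc : q.leadingCoeff ≠ 0 := Polynomial.leadingCoeff_ne_zero.mpr hq
    have hcont : Continuous fun z : ℝ × (Fin N → ℝ) =>
        MvPolynomial.eval (Fin.cons z.1 z.2) p := by
      apply (MvPolynomial.continuous_eval p).comp
      refine continuous_pi fun i => ?_
      refine Fin.cases ?_ (fun j => ?_) i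
      · simpa using continuous_fst
      · simpa [Function.comp_def] using (continuous_apply j).comp continuous_snd
    have hset : MeasurableSet {z : ℝ × (Fin N → ℝ) |
        MvPolynomial.eval (Fin.cons z.1 z.2) p ≠ 0} :=
      ((isClosed_singleton.preimage hcont).measurableSet).compl
    have key : ∀ᵐ z ∂((volume : Measure ℝ).prod (volume : Measure (Fin N → ℝ))),
        MvPolynomial.eval (Fin.cons z.1 z.2) p ≠ 0 := by
      apply ae_prod_of_ae_ae hset
      filter_upwards [ih _ hlc] with y hy
      have hmapne : q.map (MvPolynomial.eval y) ≠ 0 := by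
        intro h0
        apply hy
        have := congrArg (fun r => Polynomial.coeff r q.natDegree) h0
        simpa [Polynomial.coeff_map] using this
      have hfin : Set.Finite {a : ℝ | (q.map (MvPolynomial.eval y)).IsRoot a} :=
        Polynomial.finite_setOf_isRoot hmapne
      have h0 : (volume : Measure ℝ) {a : ℝ | (q.map (MvPolynomial.eval y)).IsRoot a} = 0 :=
        hfin.measure_zero _
      rw [ae_iff]
      convert h0 using 2
      ext a
      simp [MvPolynomial.eval_eq_eval_mv_eval', Polynomial.IsRoot, hqdef]
    -- transfer along piFinSuccAbove
    have hmp := MeasureTheory.volume_preserving_piFinSuccAbove (fun _ : Fin (N+1) => ℝ) 0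
    have hmape : Measure.map (MeasurableEquiv.piFinSuccAbove (fun _ : Fin (N+1) => ℝ) 0).symm
        (volume : Measure (ℝ × (Fin N → ℝ))) = volume :=
      (hmp.symm (MeasurableEquiv.piFinSuccAbove (fun _ : Fin (N+1) => ℝ) 0)).map_eq
    have hsetx : MeasurableSet {x : Fin (N+1) → ℝ | MvPolynomial.eval x p ≠ 0} :=
      ((isClosed_singleton.preimage (MvPolynomial.continuous_eval p)).measurableSet).compl
    rw [← Measure.volume_eq_prod] at key
    rw [← hmape, MeasureTheory.ae_map_iff (MeasurableEquiv.measurable _).aemeasurable hsetx]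
    filter_upwards [key] with z hz
    simp [MeasurableEquiv.piFinSuccAbove_symm_apply, Fin.insertNth_zero]
    exact hz

lemma eval_sumToIter {S₁ S₂ : Type*} (a : S₁ → ℝ) (y : S₂ → ℝ)
    (p : MvPolynomial (S₁ ⊕ S₂) ℝ) :
    MvPolynomial.eval (Sum.elim a y) p =
      MvPolynomial.eval a
        (MvPolynomial.map (MvPolynomial.eval y) (MvPolynomial.sumToIter ℝ S₁ S₂ p)) := by
  induction p using MvPolynomial.induction_on with
  | C r => simp [MvPolynomial.sumToIter_C]
  | add p q hp hq => simp [map_add, hp, hq]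
  | mul_X p s hp =>
    cases s with
    | inl b => simp [map_mul, MvPolynomial.sumToIter_Xl, hp]
    | inr c => simp [map_mul, MvPolynomial.sumToIter_Xr, hp]

/-- index equiv for peeling the first sample point -/
def peelEquiv (M m : ℕ) : (Fin m ⊕ (Fin M × Fin m)) ≃ (Fin (M+1) × Fin m) where
  toFun := Sum.elim (fun j => (0, j)) (fun r => (r.1.succ, r.2))
  invFun := fun q => Fin.cases (Sum.inl q.2) (fun i => Sum.inr (i, q.2)) q.1
  left_inv := by rintro (j | ⟨i, j⟩) <;> simp
  right_inv := by
    rintro ⟨i, j⟩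
    refine Fin.cases ?_ (fun i' => ?_) i <;> simp

lemma nest_ae (m : ℕ) : ∀ (M : ℕ) (p : MvPolynomial (Fin M × Fin m) ℝ), p ≠ 0 →
    ∀ᵐ x ∂(volume : Measure (Fin M → Fin m → ℝ)),
      MvPolynomial.eval (fun q => x q.1 q.2) p ≠ 0 := by
  intro M
  induction M with
  | zero =>
    intro p hp
    refine ae_of_all _ fun x => ?_
    have : IsEmpty (Fin 0 × Fin m) := ⟨fun q => q.1.elim0⟩
    obtain ⟨a, rfl⟩ := MvPolynomial.C_surjective (Fin 0 × Fin m) p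
    simpa using fun h => hp (by rw [h]; simp)
  | succ M ih =>
    intro p hp
    set p' := MvPolynomial.rename (peelEquiv M m).symm p with hp'def
    have hp' : p' ≠ 0 := by
      intro h
      rw [hp'def, ← map_zero (MvPolynomial.rename (R := ℝ) (peelEquiv M m).symm)] at h
      exact hp (MvPolynomial.rename_injective _ (peelEquiv M m).symm.injective h)
    set Q := MvPolynomial.sumToIter ℝ (Fin m) (Fin M × Fin m) p' with hQdef
    have hQ : Q ≠ 0 := by
      have : Q = MvPolynomial.sumRingEquiv ℝ (Fin m) (Fin M × Fin m) p' := by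
        rw [hQdef]
        have hh : MvPolynomial.sumToIter ℝ (Fin m) (Fin M × Fin m) =
            (MvPolynomial.sumRingEquiv ℝ (Fin m) (Fin M × Fin m) : _ →+* _) := by
          apply MvPolynomial.ringHom_ext
          · intro r; simp [MvPolynomial.sumToIter_C, MvPolynomial.sumRingEquiv_C]
          · rintro (s | s) <;> simp [MvPolynomial.sumToIter_Xl, MvPolynomial.sumToIter_Xr,
              MvPolynomial.sumRingEquiv_X_inl, MvPolynomial.sumRingEquiv_X_inr]
        rw [hh]; rfl
      rw [this]
      simp only [ne_eq, EmbeddingLike.map_eq_zero_iff]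
      exact hp'
    obtain ⟨d, hd⟩ := MvPolynomial.exists_coeff_ne_zero hQ
    -- key eval identity
    have evalid : ∀ (a : Fin m → ℝ) (y : Fin M → Fin m → ℝ),
        MvPolynomial.eval (fun q : Fin (M+1) × Fin m => (Fin.cons a y : Fin (M+1) → Fin m → ℝ) q.1 q.2) p =
        MvPolynomial.eval a (MvPolynomial.map (MvPolynomial.eval fun r : Fin M × Fin m => y r.1 r.2) Q) := by
      intro a y
      rw [hQdef, ← eval_sumToIter, hp'def, MvPolynomial.eval_rename]
      have harg : ((Sum.elim a fun r : Fin M × Fin m => y r.1 r.2) ∘ ⇑(peelEquiv M m).symm) =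
          fun q : Fin (M+1) × Fin m => (Fin.cons a y : Fin (M+1) → Fin m → ℝ) q.1 q.2 := by
        funext q
        obtain ⟨i, j⟩ := q
        refine Fin.cases ?_ (fun i' => ?_) i <;> simp [peelEquiv]
      rw [harg]
    have hcont : Continuous fun z : (Fin m → ℝ) × (Fin M → Fin m → ℝ) =>
        MvPolynomial.eval (fun q : Fin (M+1) × Fin m => (Fin.cons z.1 z.2 : Fin (M+1) → Fin m → ℝ) q.1 q.2) p := by
      apply (MvPolynomial.continuous_eval p).comp
      refine continuous_pi fun q => ?_
      obtain ⟨i, j⟩ := q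
      refine Fin.cases ?_ (fun i' => ?_) i
      · simpa [Function.comp_def] using (continuous_apply j).comp continuous_fst
      · simpa [Function.comp_def] using ((continuous_apply_apply i' j).comp continuous_snd)
    have hset : MeasurableSet {z : (Fin m → ℝ) × (Fin M → Fin m → ℝ) |
        MvPolynomial.eval (fun q : Fin (M+1) × Fin m => (Fin.cons z.1 z.2 : Fin (M+1) → Fin m → ℝ) q.1 q.2) p ≠ 0} :=
      ((isClosed_singleton.preimage hcont).measurableSet).compl
    have key : ∀ᵐ z ∂((volume : Measure (Fin m → ℝ)).prod (volume : Measure (Fin M → Fin m → ℝ))),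
        MvPolynomial.eval (fun q : Fin (M+1) × Fin m => (Fin.cons z.1 z.2 : Fin (M+1) → Fin m → ℝ) q.1 q.2) p ≠ 0 := by
      apply ae_prod_of_ae_ae hset
      filter_upwards [ih _ hd] with y hy
      have hmapne : MvPolynomial.map (MvPolynomial.eval fun r : Fin M × Fin m => y r.1 r.2) Q ≠ 0 := by
        intro h0
        apply hy
        have := congrArg (fun r => MvPolynomial.coeff d r) h0
        simpa [MvPolynomial.coeff_map] using this
      filter_upwards [mvpoly_ae _ hmapne] with a ha
      rw [evalid a y]
      exact ha
    -- transfer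
    have hmp := MeasureTheory.volume_preserving_piFinSuccAbove
      (fun _ : Fin (M+1) => (Fin m → ℝ)) 0
    have hmape : Measure.map
        (MeasurableEquiv.piFinSuccAbove (fun _ : Fin (M+1) => (Fin m → ℝ)) 0).symm
        (volume : Measure ((Fin m → ℝ) × (Fin M → Fin m → ℝ))) = volume :=
      (hmp.symm (MeasurableEquiv.piFinSuccAbove (fun _ : Fin (M+1) => (Fin m → ℝ)) 0)).map_eq
    have hcontx : Continuous fun x : Fin (M+1) → Fin m → ℝ =>
        MvPolynomial.eval (fun q : Fin (M+1) × Fin m => x q.1 q.2) p := by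
      apply (MvPolynomial.continuous_eval p).comp
      exact continuous_pi fun q => (continuous_apply_apply q.1 q.2)
    have hsetx : MeasurableSet {x : Fin (M+1) → Fin m → ℝ |
        MvPolynomial.eval (fun q : Fin (M+1) × Fin m => x q.1 q.2) p ≠ 0} :=
      ((isClosed_singleton.preimage hcontx).measurableSet).compl
    rw [← Measure.volume_eq_prod] at key
    rw [← hmape, MeasureTheory.ae_map_iff (MeasurableEquiv.measurable _).aemeasurable hsetx]
    filter_upwards [key] with z hz
    simpa [MeasurableEquiv.piFinSuccAbove_symm_apply, Fin.insertNth_zero] using hz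

lemma exists_pts {m d : ℕ} (v : Fin d → ((Fin m → ℝ) → ℝ)) (hv : LinearIndependent ℝ v) :
    ∃ pts : Fin d → (Fin m → ℝ), (Matrix.of fun k j => v k (pts j)).det ≠ 0 := by
  set u : (Fin m → ℝ) → (Fin d → ℝ) := fun x k => v k x with hu
  have hspan : Submodule.span ℝ (Set.range u) = ⊤ := by
    by_contra hne
    obtain ⟨φ, hφ0, hφ⟩ := Submodule.exists_dual_map_eq_bot_of_lt_top
      (lt_top_iff_ne_top.mpr hne) inferInstance
    set c : Fin d → ℝ := fun k => φ (Pi.single k 1) with hc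
    have hφx : ∀ xv : Fin d → ℝ, φ xv = ∑ k, xv k * c k := by
      intro xv
      conv_lhs => rw [pi_eq_sum_univ xv]
      rw [map_sum]
      refine Finset.sum_congr rfl fun k _ => ?_
      have hsingle : (fun j => if k = j then (1:ℝ) else 0) = Pi.single k 1 := by
        funext j
        simp [Pi.single_apply, eq_comm]
      rw [_root_.map_smul, smul_eq_mul, hsingle]
    have hvan : ∀ x : Fin m → ℝ, ∑ k, (u x) k * c k = 0 := by
      intro x
      have hmem : u x ∈ Submodule.span ℝ (Set.range u) := Submodule.subset_span ⟨x, rfl⟩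
      have h2 : φ (u x) ∈ (Submodule.span ℝ (Set.range u)).map φ :=
        Submodule.mem_map_of_mem hmem
      rw [hφ] at h2
      rw [← hφx]
      simpa using h2
    have hczero : ∀ k, c k = 0 := by
      have hsum : ∑ k ∈ Finset.univ, c k • v k = 0 := by
        funext x
        rw [Finset.sum_apply]
        simpa [mul_comm] using hvan x
      exact fun k => linearIndependent_iff'.mp hv Finset.univ c hsum k (Finset.mem_univ k)
    apply hφ0
    apply LinearMap.ext
    intro xv
    rw [hφx]
    simp [hczero]
  obtain ⟨s, hsub, hsp, hli⟩ := exists_linearIndependent ℝ (Set.range u)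
  have hstop : Submodule.span ℝ s = ⊤ := by rw [hsp, hspan]
  haveI : Fintype s := hli.setFinite.fintype
  let B : Module.Basis s ℝ (Fin d → ℝ) := Module.Basis.mk hli (by rw [Subtype.range_coe, hstop])
  have hcard : Fintype.card s = d := by
    rw [← Module.finrank_eq_card_basis B, Module.finrank_fin_fun]
  let e : Fin d ≃ s := (Fintype.equivFinOfCardEq hcard).symm
  have hpick : ∀ j : Fin d, ∃ x : Fin m → ℝ, u x = (e j : Fin d → ℝ) := fun j => hsub (e j).2
  choose pts hpts using hpick
  refine ⟨pts, ?_⟩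
  have hcols : LinearIndependent ℝ (fun j : Fin d => u (pts j)) := by
    have heq : (fun j : Fin d => u (pts j)) = fun j => (B (e j) : Fin d → ℝ) := by
      funext j
      rw [hpts j, Module.Basis.mk_apply]
    rw [heq]
    exact B.linearIndependent.comp e e.injective
  have hunit : IsUnit (Matrix.of fun k j => v k (pts j)) := by
    apply Matrix.linearIndependent_cols_iff_isUnit.mp
    convert hcols with j <;> rfl
  exact ((Matrix.isUnit_iff_isUnit_det _).mp hunit).ne_zero

lemma coord_ae {m : ℕ} (M : ℕ) (Q : Submodule ℝ ((Fin m → ℝ) → ℝ)) [FiniteDimensional ℝ Q]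
    (hQpoly : ∀ q ∈ Q, ∃ pol : MvPolynomial (Fin m) ℝ, ∀ x, q x = MvPolynomial.eval x pol)
    (hd : Module.finrank ℝ Q ≤ M) :
    ∀ᵐ x ∂(volume : Measure (Fin M → Fin m → ℝ)),
      ∀ q ∈ Q, (∀ j : Fin M, q (x j) = 0) → q = 0 := by
  set d := Module.finrank ℝ Q with hddef
  let b : Module.Basis (Fin d) ℝ Q := Module.finBasis ℝ Q
  let v : Fin d → ((Fin m → ℝ) → ℝ) := fun k => ((b k : Q) : (Fin m → ℝ) → ℝ)
  have hv : LinearIndependent ℝ v := by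
    have := b.linearIndependent
    exact this.map' Q.subtype (Submodule.ker_subtype Q)
  have hpol : ∀ k, ∃ pol : MvPolynomial (Fin m) ℝ, ∀ x, v k x = MvPolynomial.eval x pol :=
    fun k => hQpoly _ (b k).2
  choose pol hpolspec using hpol
  let E : Matrix (Fin d) (Fin d) (MvPolynomial (Fin M × Fin m) ℝ) :=
    Matrix.of fun k j => MvPolynomial.rename (fun t => (Fin.castLE hd j, t)) (pol k)
  set DP := E.det with hDPdef
  have hevalE : ∀ (x : Fin M → Fin m → ℝ),
      MvPolynomial.eval (fun q : Fin M × Fin m => x q.1 q.2) DP =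
      (Matrix.of fun k j => v k (x (Fin.castLE hd j))).det := by
    intro x
    rw [hDPdef, RingHom.map_det]
    congr 1
    ext k j
    simp only [RingHom.mapMatrix_apply, Matrix.map_apply, Matrix.of_apply, E,
      MvPolynomial.eval_rename]
    rw [hpolspec k (x (Fin.castLE hd j))]
    congr 1
  obtain ⟨pts, hpts⟩ := exists_pts v hv
  have hDP : DP ≠ 0 := by
    intro h0
    apply hpts
    set x' : Fin M → Fin m → ℝ := fun i => if h : (i : ℕ) < d then pts ⟨i, h⟩ else 0 with hx'def
    have hid := hevalE x'
    rw [h0, map_zero] at hid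
    have hx' : ∀ j : Fin d, x' (Fin.castLE hd j) = pts j := by
      intro j
      simp only [hx'def]
      rw [dif_pos (show ((Fin.castLE hd j : Fin M) : ℕ) < d from j.2)]
      exact congrArg pts (Fin.ext rfl)
    have : (Matrix.of fun k j => v k (x' (Fin.castLE hd j)))
        = Matrix.of fun k j => v k (pts j) := by
      ext k j
      simp only [Matrix.of_apply]
      rw [hx' j]
    rw [this] at hid
    exact hid.symm
  filter_upwards [nest_ae m M DP hDP] with x hx
  intro q hq hvanish
  have hdet : (Matrix.of fun k j => v k (x (Fin.castLE hd j))).det ≠ 0 := by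
    rw [← hevalE x]; exact hx
  have hA : IsUnit (Matrix.of fun k j => v k (x (Fin.castLE hd j))) :=
    (Matrix.isUnit_iff_isUnit_det _).mpr (isUnit_iff_ne_zero.mpr hdet)
  set c : Fin d → ℝ := fun k => b.repr ⟨q, hq⟩ k with hcdef
  have hqsum : q = ∑ k, c k • v k := by
    have h1 := b.sum_repr ⟨q, hq⟩
    calc q = ((⟨q, hq⟩ : Q) : (Fin m → ℝ) → ℝ) := rfl
    _ = ((∑ i : Fin d, b.repr ⟨q, hq⟩ i • b i : Q) : (Fin m → ℝ) → ℝ) := by rw [h1]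
    _ = ∑ k, c k • v k := by push_cast; rfl
  have hvm : Matrix.vecMul c (Matrix.of fun k j => v k (x (Fin.castLE hd j))) = 0 := by
    funext j
    have hqz : q (x (Fin.castLE hd j)) = 0 := hvanish _
    rw [hqsum, Finset.sum_apply] at hqz
    simp only [Matrix.vecMul, dotProduct, Matrix.of_apply, Pi.zero_apply]
    simpa [smul_eq_mul] using hqz
  have hinj := Matrix.vecMul_injective_iff_isUnit.mpr hA
  have hc0 : c = 0 := by
    apply hinj
    show Matrix.vecMul c _ = Matrix.vecMul 0 _
    rw [hvm, Matrix.zero_vecMul]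
  rw [hqsum, hc0]
  simp

/-- Let `𝒫'` be a finite-dimensional subspace of polynomial maps
`ℝ^m → ℝ^n`, `M₀ = max_i dim π_i(𝒫')`, `M ≥ M₀`, and `w₁, …, w_M > 0`.  Then for almost
every tuple of sample points `(x₁, …, x_M)`, the bilinear form
`(f,g) ↦ (1/M) Σ_i w_i ⟨f(x_i), g(x_i)⟩` is positive definite on `𝒫'`. -/
theorem stmt9 (m n : ℕ) (P : Submodule ℝ ((Fin m → ℝ) → (Fin n → ℝ)))
    (hpoly : ∀ f ∈ P, ∀ i : Fin n, ∃ q : MvPolynomial (Fin m) ℝ,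
      ∀ x : Fin m → ℝ, f x i = MvPolynomial.eval x q)
    [FiniteDimensional ℝ P]
    (M : ℕ) (hM : ∀ i : Fin n, Module.finrank ℝ (P.map (coordProj m n i)) ≤ M)
    (w : Fin M → ℝ) (hw : ∀ i, 0 < w i) :
    ∀ᵐ x ∂(volume : Measure (Fin M → Fin m → ℝ)),
      ∀ f ∈ P, f ≠ 0 →
        0 < (∑ i : Fin M, w i * ∑ j : Fin n, f (x i) j * f (x i) j) / M := by
  have hQpoly : ∀ i : Fin n, ∀ q ∈ P.map (coordProj m n i),
      ∃ pol : MvPolynomial (Fin m) ℝ, ∀ x, q x = MvPolynomial.eval x pol := by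
    intro i q hq
    obtain ⟨f, hfP, rfl⟩ := hq
    obtain ⟨pol, hpol⟩ := hpoly f hfP i
    exact ⟨pol, fun x => hpol x⟩
  have H : ∀ᵐ x ∂(volume : Measure (Fin M → Fin m → ℝ)),
      ∀ i : Fin n, ∀ q ∈ P.map (coordProj m n i), (∀ j : Fin M, q (x j) = 0) → q = 0 :=
    ae_all_iff.mpr fun i => coord_ae M (P.map (coordProj m n i)) (hQpoly i) (hM i)
  filter_upwards [H] with x hx
  intro f hfP hfne
  have hex : ∃ k : Fin M, f (x k) ≠ 0 := by
    by_contra h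
    push_neg at h
    apply hfne
    funext z
    funext i
    have hmem : coordProj m n i f ∈ P.map (coordProj m n i) :=
      Submodule.mem_map_of_mem hfP
    have hzero : coordProj m n i f = 0 := by
      apply hx i _ hmem
      intro j
      show f (x j) i = 0
      rw [h j]
      rfl
    exact congrFun hzero z
  obtain ⟨k, hk⟩ := hex
  have hj0 : ∃ j : Fin n, f (x k) j ≠ 0 := by
    by_contra h
    push_neg at h
    exact hk (funext h)
  obtain ⟨j0, hj0⟩ := hj0
  have hterm : ∀ i : Fin M, 0 ≤ w i * ∑ j : Fin n, f (x i) j * f (x i) j := fun i =>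
    mul_nonneg (hw i).le (Finset.sum_nonneg fun j _ => mul_self_nonneg _)
  have hpos : 0 < w k * ∑ j : Fin n, f (x k) j * f (x k) j :=
    mul_pos (hw k) (Finset.sum_pos' (fun j _ => mul_self_nonneg _)
      ⟨j0, Finset.mem_univ _, mul_self_pos.mpr hj0⟩)
  have hsum : 0 < ∑ i : Fin M, w i * ∑ j : Fin n, f (x i) j * f (x i) j :=
    Finset.sum_pos' (fun i _ => hterm i) ⟨k, Finset.mem_univ _, hpos⟩
  exact div_pos hsum (by exact_mod_cast k.pos)
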